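/- Let L(z) be a function holomorphic for |z| > 2 (real z > 2 suffices) satisfying L(z) = (1 + z)·L(z² − 2) with L(z) = Σ_{n≥0} l_n z^{−n−1}. Substituting z = w + w⁻¹ and writing L(z) = w·h(w), the function h satisfies h(w) = (1 + w + w²)·h(w²). In particular, as formal power series, h(w) = ∏_{n≥0} (1 + w^{2^n} + w^{2·2^n}). -/

import Mathlib

set_option maxHeartbeats 1000000

open Filter Topology

private lemma lgf_bound_aux (l : ℕ → ℝ)
    (hconv : Summable (fun n : ℕ => l n / 3 ^ (n + 1))) :
    ∃ C : ℝ, 0 ≤ C ∧ ∀ n : ℕ, |l n| ≤ C * 3 ^ (n + 1) := by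
  have habs : Summable (fun n : ℕ => |l n / 3 ^ (n + 1)|) := hconv.abs
  refine ⟨∑' n : ℕ, |l n / 3 ^ (n + 1)|, tsum_nonneg fun n => abs_nonneg _, ?_⟩
  intro n
  have := Summable.le_tsum habs n (fun m _ => abs_nonneg _)
  rw [abs_div] at this
  have h3 : |((3:ℝ) ^ (n+1))| = 3 ^ (n+1) := abs_of_pos (by positivity)
  rw [h3, div_le_iff₀ (by positivity)] at this
  linarith [this]

private lemma lgf_zL_bound (l : ℕ → ℝ) (hl0 : l 0 = 1) (C : ℝ)
    (hbound : ∀ n : ℕ, |l n| ≤ C * 3 ^ (n + 1))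
    (hconv : ∀ z : ℝ, 2 < z → Summable (fun n : ℕ => l n / z ^ (n + 1)))
    (L : ℝ → ℝ) (hL : ∀ z : ℝ, 2 < z → L z = ∑' n : ℕ, l n / z ^ (n + 1)) :
    ∀ z : ℝ, 3 < z → |z * L z - 1| ≤ 9 * C / (z - 3) := by
  intro z hz3
  have hz2 : (2:ℝ) < z := by linarith
  have hz0 : (0:ℝ) < z := by linarith
  have hzne : z ≠ 0 := ne_of_gt hz0
  have hsz : Summable (fun n : ℕ => l n / z ^ (n + 1)) := hconv z hz2
  have hzL : z * L z = ∑' n : ℕ, l n / z ^ n := by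
    rw [hL z hz2, ← tsum_mul_left]
    congr 1
    funext n
    rw [pow_succ]
    field_simp
  have hsz' : Summable (fun n : ℕ => l n / z ^ n) := by
    have := hsz.mul_left z
    apply this.congr
    intro n
    rw [pow_succ]
    field_simp
  have hsplit : (∑' n : ℕ, l n / z ^ n) = l 0 / z ^ 0 + ∑' n : ℕ, l (n + 1) / z ^ (n + 1) :=
    Summable.tsum_eq_zero_add hsz'
  have htailsum : Summable (fun n : ℕ => l (n + 1) / z ^ (n + 1)) :=
    (summable_nat_add_iff 1).mpr hsz'
  have h3z1 : 3 / z < 1 := by rw [div_lt_one hz0]; linarith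
  have hgeo : Summable (fun n : ℕ => (9 * C / z) * (3 / z) ^ n) :=
    (summable_geometric_of_lt_one (by positivity) h3z1).mul_left _
  have habsnorm : Summable (fun n : ℕ => ‖l (n + 1) / z ^ (n + 1)‖) := htailsum.abs
  have htail : |∑' n : ℕ, l (n + 1) / z ^ (n + 1)| ≤ 9 * C / (z - 3) := by
    calc |∑' n : ℕ, l (n + 1) / z ^ (n + 1)|
        = ‖∑' n : ℕ, l (n + 1) / z ^ (n + 1)‖ := (Real.norm_eq_abs _).symm
      _ ≤ ∑' n : ℕ, ‖l (n + 1) / z ^ (n + 1)‖ := norm_tsum_le_tsum_norm habsnorm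
      _ ≤ ∑' n : ℕ, (9 * C / z) * (3 / z) ^ n := by
          apply Summable.tsum_le_tsum _ habsnorm hgeo
          intro n
          rw [Real.norm_eq_abs, abs_div, abs_of_pos (show (0:ℝ) < z ^ (n+1) by positivity),
            div_le_iff₀ (by positivity)]
          calc |l (n + 1)| ≤ C * 3 ^ (n + 2) := hbound (n + 1)
            _ = 9 * C / z * (3 / z) ^ n * z ^ (n + 1) := by
                rw [div_pow]
                field_simp
                ring
      _ = (9 * C / z) * (1 - 3 / z)⁻¹ := by
          rw [tsum_mul_left, tsum_geometric_of_lt_one (by positivity) h3z1]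
      _ = 9 * C / (z - 3) := by
          field_simp
  rw [hzL, hsplit, hl0]
  simpa using htail

/-- Suppose `L(z) = ∑_{n≥0} l_n z^{-n-1}` converges for real `z > 2`, `l_0 = 1`, and
`L(z) = (1 + z) L(z² - 2)`. Substituting `z = w + w⁻¹` and writing `L(z) = w · h(w)`,
the function `h(w) = L(w + w⁻¹)/w` satisfies `h(w) = (1 + w + w²) h(w²)` for
`w ∈ (0,1)`, and moreover `h(w) = ∏_{n≥0} (1 + w^(2^n) + w^(2·2^n))`. -/
theorem length_generating_function (l : ℕ → ℝ) (hl0 : l 0 = 1)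
    (hconv : ∀ z : ℝ, 2 < z → Summable (fun n : ℕ => l n / z ^ (n + 1)))
    (L : ℝ → ℝ) (hL : ∀ z : ℝ, 2 < z → L z = ∑' n : ℕ, l n / z ^ (n + 1))
    (hfun : ∀ z : ℝ, 2 < z → L z = (1 + z) * L (z ^ 2 - 2)) :
    ∀ w : ℝ, 0 < w → w < 1 →
      L (w + w⁻¹) / w = (1 + w + w ^ 2) * (L (w ^ 2 + (w ^ 2)⁻¹) / w ^ 2) ∧
      L (w + w⁻¹) / w = ∏' n : ℕ, (1 + w ^ (2 ^ n) + w ^ (2 * 2 ^ n)) := by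
  have key : ∀ v : ℝ, 0 < v → v < 1 →
      L (v + v⁻¹) / v = (1 + v + v ^ 2) * (L (v ^ 2 + (v ^ 2)⁻¹) / v ^ 2) := by
    intro v hv0 hv1
    have hvne : v ≠ 0 := ne_of_gt hv0
    have hv2 : 2 < v + v⁻¹ := by
      have h1 : v * v⁻¹ = 1 := mul_inv_cancel₀ hvne
      nlinarith [sq_nonneg (v - 1)]
    have hsq : (v + v⁻¹) ^ 2 - 2 = v ^ 2 + (v ^ 2)⁻¹ := by
      field_simp
      ring
    have := hfun (v + v⁻¹) hv2
    rw [hsq] at this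
    rw [this]
    field_simp
    ring
  intro w hw0 hw1
  refine ⟨key w hw0 hw1, ?_⟩
  obtain ⟨C, hC0, hbound⟩ := lgf_bound_aux l (hconv 3 (by norm_num))
  have hzLb := lgf_zL_bound l hl0 C hbound hconv L hL
  set f : ℕ → ℝ := fun n => 1 + w ^ (2 ^ n) + w ^ (2 * 2 ^ n) with hf
  set v : ℕ → ℝ := fun N => w ^ (2 ^ N) with hvdef
  set P : ℕ → ℝ := fun N => ∏ k ∈ Finset.range N, f k with hPdef
  set A : ℝ := L (w + w⁻¹) / w with hA
  have hvpos : ∀ N, 0 < v N := fun N => pow_pos hw0 _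
  have hvlt : ∀ N, v N < 1 := fun N => pow_lt_one₀ hw0.le hw1 (by positivity)
  have hvsq : ∀ N, (v N) ^ 2 = v (N + 1) := by
    intro N
    simp only [hvdef]
    rw [← pow_mul, pow_succ]
  have hfv : ∀ N, f N = 1 + v N + (v N) ^ 2 := by
    intro N
    simp only [hf, hvdef, ← pow_mul, Nat.mul_comm 2 (2 ^ N)]
  -- iteration
  have hiter : ∀ N, A = P N * (L (v N + (v N)⁻¹) / v N) := by
    intro N
    induction N with
    | zero => simp [hPdef, hA, hvdef]
    | succ N ih =>
      rw [ih, key (v N) (hvpos N) (hvlt N)]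
      simp only [hPdef, Finset.prod_range_succ, hfv, hvsq]
      ring
  -- limits
  have hvlim : Tendsto v atTop (𝓝 0) := by
    have hub : ∀ N, v N ≤ w ^ N := by
      intro N
      exact pow_le_pow_of_le_one hw0.le hw1.le (Nat.lt_two_pow_self (n := N)).le
    have hlb : ∀ N, 0 ≤ v N := fun N => (hvpos N).le
    exact squeeze_zero hlb hub (tendsto_pow_atTop_nhds_zero_of_lt_one hw0.le hw1)
  have hvinv : Tendsto (fun N => (v N)⁻¹) atTop atTop := by
    apply Filter.Tendsto.inv_tendsto_nhdsGT_zero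
    rw [tendsto_nhdsWithin_iff]
    exact ⟨hvlim, Eventually.of_forall fun N => hvpos N⟩
  have hzlim : Tendsto (fun N => v N + (v N)⁻¹) atTop atTop :=
    tendsto_atTop_mono (fun N => le_add_of_nonneg_left (hvpos N).le) hvinv
  have hzL1 : Tendsto (fun N => (v N + (v N)⁻¹) * L (v N + (v N)⁻¹)) atTop (𝓝 1) := by
    have hsub : Tendsto (fun N => (v N + (v N)⁻¹) * L (v N + (v N)⁻¹) - 1) atTop (𝓝 0) := by
      apply squeeze_zero_norm' (a := fun N => 9 * C / ((v N + (v N)⁻¹) - 3))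
      · filter_upwards [hzlim.eventually_gt_atTop 3] with N hN
        simpa [Real.norm_eq_abs] using hzLb _ hN
      · have h1 : Tendsto (fun N => (v N + (v N)⁻¹) - 3) atTop atTop :=
          tendsto_atTop_add_const_right _ _ hzlim
        have := h1.inv_tendsto_atTop.const_mul (9 * C)
        simpa [div_eq_mul_inv] using this
    have := hsub.add_const 1
    simpa using this
  have hglim : Tendsto (fun N => L (v N + (v N)⁻¹) / v N) atTop (𝓝 1) := by
    have heq : ∀ N, L (v N + (v N)⁻¹) / v N
        = ((v N + (v N)⁻¹) * L (v N + (v N)⁻¹)) / (1 + (v N) ^ 2) := by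
      intro N
      have hne : v N ≠ 0 := ne_of_gt (hvpos N)
      field_simp
      ring
    have hden : Tendsto (fun N => 1 + (v N) ^ 2) atTop (𝓝 1) := by
      have := (hvlim.pow 2).const_add 1
      simpa using this
    have h2 : Tendsto (fun N => ((v N + (v N)⁻¹) * L (v N + (v N)⁻¹)) / (1 + (v N) ^ 2))
        atTop (𝓝 1) := by
      have := hzL1.div hden one_ne_zero
      rw [div_one] at this
      exact this
    exact Tendsto.congr (fun N => (heq N).symm) h2
  -- partial products tend to A
  have hPlim : Tendsto P atTop (𝓝 A) := by
    have hne : ∀ᶠ N in atTop, L (v N + (v N)⁻¹) / v N ≠ 0 :=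
      hglim.eventually_ne one_ne_zero
    have heq : P =ᶠ[atTop] (fun N => A / (L (v N + (v N)⁻¹) / v N)) := by
      filter_upwards [hne] with N hN
      rw [eq_div_iff hN]
      exact (hiter N).symm
    have hT : Tendsto (fun N => A / (L (v N + (v N)⁻¹) / v N)) atTop (𝓝 A) := by
      have h3 : Tendsto (fun N => A / (L (v N + (v N)⁻¹) / v N)) atTop (𝓝 (A / 1)) :=
        tendsto_const_nhds.div hglim one_ne_zero
      simpa using h3
    exact hT.congr' heq.symm
  -- HasProd via monotone net
  have hfone : ∀ n, 1 ≤ f n := by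
    intro n
    have h1 : 0 ≤ w ^ (2 ^ n) := by positivity
    have h2 : 0 ≤ w ^ (2 * 2 ^ n) := by positivity
    simp only [hf]
    linarith
  have hfnonneg : ∀ n, (0:ℝ) ≤ f n := fun n => le_trans zero_le_one (hfone n)
  have hmono : Monotone (fun s : Finset ℕ => ∏ i ∈ s, f i) := by
    intro s t hst
    have hsd : (∏ i ∈ t \ s, f i) * ∏ i ∈ s, f i = ∏ i ∈ t, f i :=
      Finset.prod_sdiff hst
    have h1 : (1:ℝ) ≤ ∏ i ∈ t \ s, f i := by
      calc (1:ℝ) = ∏ _i ∈ t \ s, (1:ℝ) := by simp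
        _ ≤ ∏ i ∈ t \ s, f i :=
          Finset.prod_le_prod (fun i _ => zero_le_one) (fun i _ => hfone i)
    have h0 : (0:ℝ) ≤ ∏ i ∈ s, f i := Finset.prod_nonneg fun i _ => hfnonneg i
    calc (∏ i ∈ s, f i) = 1 * ∏ i ∈ s, f i := (one_mul _).symm
      _ ≤ (∏ i ∈ t \ s, f i) * ∏ i ∈ s, f i := mul_le_mul_of_nonneg_right h1 h0
      _ = ∏ i ∈ t, f i := hsd
  have hPmono : Monotone P := by
    intro M N h
    exact hmono (Finset.range_subset_range.mpr h)
  have hub : ∀ s : Finset ℕ, (∏ i ∈ s, f i) ≤ A := by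
    intro s
    obtain ⟨n, hn⟩ := s.exists_nat_subset_range
    calc (∏ i ∈ s, f i) ≤ P n := hmono hn
      _ ≤ A := hPmono.ge_of_tendsto hPlim n
  have hlub : IsLUB (Set.range fun s : Finset ℕ => ∏ i ∈ s, f i) A := by
    constructor
    · rintro x ⟨s, rfl⟩
      exact hub s
    · intro b hb
      refine le_of_tendsto hPlim (Eventually.of_forall fun N => ?_)
      exact hb ⟨Finset.range N, rfl⟩
  have hprod : HasProd f A := tendsto_atTop_isLUB hmono hlub
  exact hprod.tprod_eq.symm
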